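/- For b ≥ e², if X_b and Y_b are independent random variables each with density f(x) = 1/(x log b) · 1_{(1,b)}(x), then the differential entropy satisfies h(X_b + Y_b) > (2/3) log b − log 2. -/

import Mathlib

open MeasureTheory Real Set

namespace Stmt5

noncomputable def F (b : ℝ) : ℝ → ℝ :=
  fun x => if 1 < x ∧ x < b then 1 / (x * Real.log b) else 0

variable {b : ℝ}

lemma hb1 (hb : Real.exp 2 ≤ b) : 1 < b :=
  lt_of_lt_of_le (by simpa using Real.exp_lt_exp.2 (by norm_num : (0:ℝ) < 2)) hb

lemma hL2 (hb : Real.exp 2 ≤ b) : 2 ≤ Real.log b := by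
  have hbpos : (0:ℝ) < b := lt_trans one_pos (hb1 hb)
  rwa [Real.le_log_iff_exp_le hbpos]

lemma measurable_F : Measurable (F b) := by
  unfold F
  have hset : MeasurableSet {x : ℝ | 1 < x ∧ x < b} := by
    have : {x : ℝ | 1 < x ∧ x < b} = Set.Ioo 1 b := rfl
    rw [this]; exact measurableSet_Ioo
  exact Measurable.ite hset (by measurability) measurable_const

lemma F_nonneg (hb : Real.exp 2 ≤ b) (x : ℝ) : 0 ≤ F b x := by
  unfold F
  split
  · rename_i h
    have hL := hL2 hb
    have hx : (0:ℝ) < x := lt_trans one_pos h.1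
    positivity
  · exact le_refl 0

lemma F_supp {x : ℝ} (h : F b x ≠ 0) : 1 < x ∧ x < b := by
  by_cases h' : 1 < x ∧ x < b
  · exact h'
  · exfalso; apply h; unfold F; rw [if_neg h']

lemma F_le_one (hb : Real.exp 2 ≤ b) (x : ℝ) : |F b x| ≤ 1 := by
  rw [abs_of_nonneg (F_nonneg hb x)]
  unfold F
  split
  · rename_i h
    have hL := hL2 hb
    rw [div_le_one (by nlinarith [h.1])]
    nlinarith [h.1]
  · norm_num

/-- integrable from boundedness and support in a bounded interval -/
lemma integrable_bdd_supp {φ : ℝ → ℝ} (hm : AEStronglyMeasurable φ volume) (a c C : ℝ)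
    (h0 : ∀ x, x ∉ Set.Ioo a c → φ x = 0) (hC : ∀ x, |φ x| ≤ C) :
    Integrable φ := by
  refine Integrable.mono' (g := (Set.Ioo a c).indicator fun _ => C) ?_ hm ?_
  · exact (integrable_indicator_iff measurableSet_Ioo).2
      (integrableOn_const measure_Ioo_lt_top.ne)
  · refine Filter.Eventually.of_forall fun x => ?_
    by_cases hx : x ∈ Set.Ioo a c
    · simpa [Set.indicator_of_mem hx, Real.norm_eq_abs] using hC x
    · simp [Set.indicator_of_notMem hx, h0 x hx]

lemma intervalIntegrable_bdd {φ : ℝ → ℝ} (hm : AEStronglyMeasurable φ volume) {p q C : ℝ}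
    (hC : ∀ x, |φ x| ≤ C) : IntervalIntegrable φ volume p q := by
  rw [intervalIntegrable_iff]
  refine Integrable.mono' (g := fun _ => C) ?_ hm.restrict ?_
  · refine integrableOn_const ?_
    simp [Set.uIoc]
  · exact Filter.Eventually.of_forall fun x => by simpa [Real.norm_eq_abs] using hC x

lemma integrable_F (hb : Real.exp 2 ≤ b) : Integrable (F b) := by
  refine integrable_bdd_supp measurable_F.aestronglyMeasurable 1 b 1 ?_ (F_le_one hb)
  intro x hx
  unfold F
  rw [if_neg]
  simpa [Set.mem_Ioo] using hx

lemma integral_logpow (n : ℕ) {p q : ℝ} (hp : 0 < p) (hpq : p ≤ q) :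
    ∫ x in p..q, (Real.log x) ^ n / x =
      ((Real.log q) ^ (n + 1) - (Real.log p) ^ (n + 1)) / (n + 1) := by
  have hd : ∀ x ∈ Set.uIcc p q,
      HasDerivAt (fun x => (Real.log x) ^ (n + 1) / (n + 1)) ((Real.log x) ^ n / x) x := by
    intro x hx
    rw [Set.uIcc_of_le hpq] at hx
    have hx0 : 0 < x := lt_of_lt_of_le hp hx.1
    have h := ((Real.hasDerivAt_log hx0.ne').pow (n + 1)).div_const ((n : ℝ) + 1)
    refine h.congr_deriv ?_
    have : ((n : ℝ) + 1) ≠ 0 := by positivity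
    push_cast
    field_simp
  rw [intervalIntegral.integral_eq_sub_of_hasDerivAt hd ?_]
  · push_cast; ring
  · apply ContinuousOn.intervalIntegrable
    apply ContinuousOn.div
    · apply ContinuousOn.pow
      apply Real.continuousOn_log.mono
      intro x hx
      rw [Set.uIcc_of_le hpq] at hx
      simp only [Set.mem_compl_iff, Set.mem_singleton_iff]
      exact ne_of_gt (lt_of_lt_of_le hp hx.1)
    · exact continuousOn_id
    · intro x hx
      rw [Set.uIcc_of_le hpq] at hx
      exact ne_of_gt (lt_of_lt_of_le hp hx.1)


lemma integral_F_mul (hb : Real.exp 2 ≤ b) (ψ : ℝ → ℝ) :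
    ∫ u, F b u * ψ u = ∫ u in (1:ℝ)..b, 1 / (u * Real.log b) * ψ u := by
  rw [intervalIntegral.integral_of_le (hb1 hb).le, integral_Ioc_eq_integral_Ioo,
    ← integral_indicator measurableSet_Ioo]
  congr 1
  ext u
  by_cases h : u ∈ Set.Ioo (1:ℝ) b
  · rw [Set.indicator_of_mem h]
    unfold F
    rw [if_pos (by simpa [Set.mem_Ioo] using h)]
  · rw [Set.indicator_of_notMem h]
    unfold F
    rw [if_neg (by simpa [Set.mem_Ioo] using h), zero_mul]

lemma integral_F_eq_one (hb : Real.exp 2 ≤ b) : ∫ u, F b u = 1 := by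
  have hL := hL2 hb
  have hLne : Real.log b ≠ 0 := by linarith
  have h := integral_F_mul hb (fun _ => 1)
  simp only [mul_one] at h
  rw [h]
  have : ∀ u ∈ Set.uIcc (1:ℝ) b, 1 / (u * Real.log b) = (Real.log b)⁻¹ * (1 / u) := by
    intro u hu
    rw [Set.uIcc_of_le (hb1 hb).le] at hu
    have : (0:ℝ) < u := lt_of_lt_of_le one_pos hu.1
    field_simp
  rw [intervalIntegral.integral_congr this, intervalIntegral.integral_const_mul,
    integral_one_div (by
      rw [Set.uIcc_of_le (hb1 hb).le]
      intro hmem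
      exact absurd hmem.1 (by norm_num))]
  simp only [div_one]
  field_simp


lemma intervalIntegrable_bdd' {φ : ℝ → ℝ} (hm : AEStronglyMeasurable φ volume) {p q C : ℝ}
    (hC : ∀ x ∈ Set.uIoc p q, |φ x| ≤ C) : IntervalIntegrable φ volume p q := by
  rw [intervalIntegrable_iff]
  refine Integrable.mono' (g := fun _ => C) ?_ hm.restrict ?_
  · refine integrableOn_const ?_
    simp [Set.uIoc]
  · refine (ae_restrict_iff' measurableSet_uIoc).2 ?_
    exact Filter.Eventually.of_forall fun x hx => by simpa [Real.norm_eq_abs] using hC x hx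

lemma A_eq (hb : Real.exp 2 ≤ b) {y : ℝ} (hy : y ∈ Set.Ioo 1 b) :
    ∫ u, F b u * (if y ≤ u then Real.log u else Real.log y)
      = Real.log b / 2 + (Real.log y) ^ 2 / (2 * Real.log b) := by
  have hL := hL2 hb
  have hLne : Real.log b ≠ 0 := by linarith
  have hy0 : (0:ℝ) < y := lt_trans one_pos hy.1
  rw [integral_F_mul hb]
  have hmeas : AEStronglyMeasurable
      (fun u => 1 / (u * Real.log b) * (if y ≤ u then Real.log u else Real.log y)) volume := by
    apply Measurable.aestronglyMeasurable
    apply Measurable.mul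
    · measurability
    · exact Measurable.ite measurableSet_Ici Real.measurable_log measurable_const
  have hbnd : ∀ (p q : ℝ), 1 ≤ p → p ≤ q → q ≤ b → IntervalIntegrable
      (fun u => 1 / (u * Real.log b) * (if y ≤ u then Real.log u else Real.log y))
      volume p q := by
    intro p q hp hpq hq
    refine intervalIntegrable_bdd' hmeas (C := Real.log b) ?_
    intro u hu
    rw [Set.uIoc_of_le hpq] at hu
    have hu1 : 1 < u := lt_of_le_of_lt hp hu.1
    have hub : u ≤ b := le_trans hu.2 hq
    rw [abs_mul]
    have h1 : |1 / (u * Real.log b)| ≤ 1 := by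
      rw [abs_of_nonneg (by positivity)]
      rw [div_le_one (by nlinarith)]
      nlinarith
    have h2 : |if y ≤ u then Real.log u else Real.log y| ≤ Real.log b := by
      split
      · rw [abs_of_nonneg (Real.log_nonneg hu1.le)]
        exact Real.log_le_log (by linarith) hub
      · rw [abs_of_nonneg (Real.log_nonneg hy.1.le)]
        exact Real.log_le_log hy0 hy.2.le
    calc |1 / (u * Real.log b)| * |if y ≤ u then Real.log u else Real.log y|
        ≤ 1 * Real.log b := by
          apply mul_le_mul h1 h2 (abs_nonneg _) one_pos.le
      _ = Real.log b := one_mul _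
  rw [← intervalIntegral.integral_add_adjacent_intervals (b := y)
    (hbnd 1 y le_rfl hy.1.le hy.2.le) (hbnd y b hy.1.le hy.2.le le_rfl)]
  have e1 : ∫ u in (1:ℝ)..y, 1 / (u * Real.log b) * (if y ≤ u then Real.log u else Real.log y)
      = (Real.log y / Real.log b) * Real.log y := by
    have : Set.EqOn (fun u => 1 / (u * Real.log b) * (if y ≤ u then Real.log u else Real.log y))
        (fun u => (Real.log y / Real.log b) * (1 / u)) (Set.uIcc 1 y) := by
      intro u hu
      rw [Set.uIcc_of_le hy.1.le] at hu
      have hu0 : (0:ℝ) < u := lt_of_lt_of_le one_pos hu.1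
      simp only
      have hite : (if y ≤ u then Real.log u else Real.log y) = Real.log y := by
        split
        · rename_i hyu
          have : u = y := le_antisymm hu.2 hyu
          rw [this]
        · rfl
      rw [hite]
      simp only [one_div, mul_inv, div_eq_mul_inv]
      ring
    rw [intervalIntegral.integral_congr this, intervalIntegral.integral_const_mul,
      integral_one_div (by
        rw [Set.uIcc_of_le hy.1.le]
        intro hmem
        exact absurd hmem.1 (by norm_num))]
    rw [div_one]
  have e2 : ∫ u in y..b, 1 / (u * Real.log b) * (if y ≤ u then Real.log u else Real.log y)
      = (1 / Real.log b) * (((Real.log b) ^ 2 - (Real.log y) ^ 2) / 2) := by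
    have : Set.EqOn (fun u => 1 / (u * Real.log b) * (if y ≤ u then Real.log u else Real.log y))
        (fun u => (1 / Real.log b) * ((Real.log u) ^ 1 / u)) (Set.uIcc y b) := by
      intro u hu
      rw [Set.uIcc_of_le hy.2.le] at hu
      have hu0 : (0:ℝ) < u := lt_of_lt_of_le hy0 hu.1
      simp only
      rw [if_pos hu.1]
      simp only [one_div, mul_inv, pow_one, div_eq_mul_inv]
      ring
    rw [intervalIntegral.integral_congr this, intervalIntegral.integral_const_mul,
      integral_logpow 1 hy0 hy.2.le]
    norm_num
  rw [e1, e2]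
  field_simp
  ring


lemma outer_eq (hb : Real.exp 2 ≤ b) :
    ∫ y, F b y * (Real.log b / 2 + (Real.log y) ^ 2 / (2 * Real.log b))
      = 2 / 3 * Real.log b := by
  have hL := hL2 hb
  have hLne : Real.log b ≠ 0 := by linarith
  rw [integral_F_mul hb]
  have heq : Set.EqOn
      (fun y => 1 / (y * Real.log b) * (Real.log b / 2 + (Real.log y) ^ 2 / (2 * Real.log b)))
      (fun y => (1/2) * (1/y) + (1 / (2 * (Real.log b)^2)) * ((Real.log y) ^ 2 / y))
      (Set.uIcc 1 b) := by
    intro y hy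
    rw [Set.uIcc_of_le (hb1 hb).le] at hy
    have hy0 : (0:ℝ) < y := lt_of_lt_of_le one_pos hy.1
    simp only
    field_simp
  rw [intervalIntegral.integral_congr heq]
  have int1 : IntervalIntegrable (fun y : ℝ => (1/2) * (1/y)) volume 1 b := by
    apply ContinuousOn.intervalIntegrable
    apply ContinuousOn.mul continuousOn_const
    apply ContinuousOn.div continuousOn_const continuousOn_id
    intro y hy
    rw [Set.uIcc_of_le (hb1 hb).le] at hy
    exact ne_of_gt (lt_of_lt_of_le one_pos hy.1)
  have int2 : IntervalIntegrable
      (fun y : ℝ => (1 / (2 * (Real.log b)^2)) * ((Real.log y) ^ 2 / y)) volume 1 b := by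
    apply ContinuousOn.intervalIntegrable
    apply ContinuousOn.mul continuousOn_const
    apply ContinuousOn.div
    · apply ContinuousOn.pow
      apply Real.continuousOn_log.mono
      intro y hy
      rw [Set.uIcc_of_le (hb1 hb).le] at hy
      exact ne_of_gt (lt_of_lt_of_le one_pos hy.1)
    · exact continuousOn_id
    · intro y hy
      rw [Set.uIcc_of_le (hb1 hb).le] at hy
      exact ne_of_gt (lt_of_lt_of_le one_pos hy.1)
  rw [intervalIntegral.integral_add int1 int2, intervalIntegral.integral_const_mul,
    intervalIntegral.integral_const_mul,
    integral_one_div (by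
      rw [Set.uIcc_of_le (hb1 hb).le]
      intro hmem
      exact absurd hmem.1 (by norm_num)),
    integral_logpow 2 one_pos (hb1 hb).le]
  simp only [Real.log_one, div_one]
  norm_num
  field_simp
  ring


lemma conv_eq (hb : Real.exp 2 ≤ b) (x : ℝ) :
    ∫ y, F b (x - y) * F b y
      = ∫ y in Set.Ioo (max 1 (x - b)) (min b (x - 1)), 1 / (y * (x - y) * (Real.log b) ^ 2) := by
  rw [← integral_indicator measurableSet_Ioo]
  congr 1
  ext y
  by_cases h : y ∈ Set.Ioo (max 1 (x - b)) (min b (x - 1))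
  · rw [Set.indicator_of_mem h]
    obtain ⟨h1, h2⟩ := h
    have hy1 : 1 < y := lt_of_le_of_lt (le_max_left _ _) h1
    have hyb : y < b := lt_of_lt_of_le h2 (min_le_left _ _)
    have hxy1 : 1 < x - y := by
      have := lt_of_lt_of_le h2 (min_le_right _ _)
      linarith
    have hxyb : x - y < b := by
      have := lt_of_le_of_lt (le_max_right _ _) h1
      linarith
    unfold F
    rw [if_pos ⟨hxy1, hxyb⟩, if_pos ⟨hy1, hyb⟩]
    rw [div_mul_div_comm, one_mul]
    congr 1
    ring
  · rw [Set.indicator_of_notMem h]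
    have hne : ¬((1 < x - y ∧ x - y < b) ∧ (1 < y ∧ y < b)) := by
      rintro ⟨⟨a1, a2⟩, ⟨a3, a4⟩⟩
      exact h ⟨max_lt a3 (by linarith), lt_min a4 (by linarith)⟩
    unfold F
    by_cases hA : 1 < x - y ∧ x - y < b
    · rw [if_neg fun hB => hne ⟨hA, hB⟩, mul_zero]
    · rw [if_neg hA, zero_mul]

lemma conv_nonneg (hb : Real.exp 2 ≤ b) (x : ℝ) : 0 ≤ ∫ y, F b (x - y) * F b y :=
  integral_nonneg fun y => mul_nonneg (F_nonneg hb _) (F_nonneg hb _)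

lemma conv_zero (hb : Real.exp 2 ≤ b) {x : ℝ} (hx : x ∉ Set.Ioo 2 (2 * b)) :
    (∫ y, F b (x - y) * F b y) = 0 := by
  rw [conv_eq hb]
  have hbb := hb1 hb
  have hempty : Set.Ioo (max 1 (x - b)) (min b (x - 1)) = ∅ := by
    apply Set.Ioo_eq_empty
    intro hlt
    apply hx
    constructor
    · have := lt_of_le_of_lt (le_max_left 1 (x - b)) (lt_of_lt_of_le hlt (min_le_right _ _))
      linarith
    · have := lt_of_le_of_lt (le_max_right 1 (x - b)) (lt_of_lt_of_le hlt (min_le_left _ _))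
      linarith
  rw [hempty, setIntegral_empty]

lemma conv_le (hb : Real.exp 2 ≤ b) {x : ℝ} (hx2 : 2 < x) :
    (∫ y, F b (x - y) * F b y) ≤ 2 / (x * Real.log b) := by
  have hL := hL2 hb
  have hbb := hb1 hb
  have hx0 : (0:ℝ) < x := by linarith
  rw [conv_eq hb]
  set α := max 1 (x - b) with hα
  set β := min b (x - 1) with hβ
  have hα1 : 1 ≤ α := le_max_left _ _
  have hxβ : x - β = α := by
    rcases le_total b (x - 1) with h | h
    · rw [hβ, min_eq_left h, hα, max_eq_right (by linarith)]
    · rw [hβ, min_eq_right h, hα, max_eq_left (by linarith)]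
      ring
  have hxα : x - α = β := by linarith
  by_cases hab : α < β
  · rw [← integral_Ioc_eq_integral_Ioo, ← intervalIntegral.integral_of_le hab.le]
    have hd : ∀ u ∈ Set.uIcc α β,
        HasDerivAt (fun y => (Real.log y - Real.log (x - y)) / (x * (Real.log b) ^ 2))
          (1 / (u * (x - u) * (Real.log b) ^ 2)) u := by
      intro u hu
      rw [Set.uIcc_of_le hab.le] at hu
      have hu0 : (0:ℝ) < u := lt_of_lt_of_le (by linarith) hu.1
      have hxu0 : (0:ℝ) < x - u := by
        have : u ≤ β := hu.2
        linarith [hxβ, hα1]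
      have d1 : HasDerivAt Real.log u⁻¹ u := Real.hasDerivAt_log hu0.ne'
      have dinner : HasDerivAt (fun y : ℝ => x - y) (-1) u := by
        simpa using (hasDerivAt_id u).const_sub x
      have d2 : HasDerivAt (fun y => Real.log (x - y)) ((x - u)⁻¹ * (-1)) u :=
        (Real.hasDerivAt_log hxu0.ne').comp u dinner
      have := (d1.sub d2).div_const (x * (Real.log b) ^ 2)
      refine this.congr_deriv ?_
      have hLne : Real.log b ≠ 0 := by linarith
      field_simp
      ring
    have hint : IntervalIntegrable (fun u => 1 / (u * (x - u) * (Real.log b) ^ 2)) volume α β := by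
      apply ContinuousOn.intervalIntegrable
      apply ContinuousOn.div continuousOn_const
      · fun_prop
      · intro u hu
        rw [Set.uIcc_of_le hab.le] at hu
        have hu0 : (0:ℝ) < u := lt_of_lt_of_le (by linarith) hu.1
        have hxu0 : (0:ℝ) < x - u := by
          have : u ≤ β := hu.2
          linarith [hxβ, hα1]
        have hLne : Real.log b ≠ 0 := by linarith
        positivity
    rw [intervalIntegral.integral_eq_sub_of_hasDerivAt hd hint]
    rw [hxβ, hxα]
    have hβb : Real.log β ≤ Real.log b := by
      apply Real.log_le_log (by linarith [hα1, hab]) (min_le_left _ _)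
    have hα0 : 0 ≤ Real.log α := Real.log_nonneg hα1
    rw [div_sub_div_same, div_le_div_iff₀ (by positivity) (by positivity)]
    nlinarith [mul_le_mul_of_nonneg_left
      (by linarith : Real.log β - Real.log α ≤ Real.log b)
      (by positivity : (0:ℝ) ≤ 2 * (x * Real.log b))]
  · push_neg at hab
    rw [Set.Ioo_eq_empty (fun h => absurd h (not_lt.2 hab)), setIntegral_empty]
    positivity


lemma conv_le_half (hb : Real.exp 2 ≤ b) (x : ℝ) :
    (∫ y, F b (x - y) * F b y) ≤ 1 / 2 := by
  have hL := hL2 hb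
  by_cases hx2 : 2 < x
  · refine le_trans (conv_le hb hx2) ?_
    rw [div_le_div_iff₀ (by nlinarith) (by norm_num)]
    nlinarith
  · rw [conv_zero hb (by simp [Set.mem_Ioo]; intro h; exact absurd h hx2)]
    norm_num

lemma conv_meas : Measurable fun x => ∫ y, F b (x - y) * F b y := by
  have hsm : StronglyMeasurable fun p : ℝ × ℝ => F b (p.1 - p.2) * F b p.2 :=
    ((measurable_F.comp (measurable_fst.sub measurable_snd)).mul
      (measurable_F.comp measurable_snd)).stronglyMeasurable
  exact hsm.integral_prod_right'.measurable

lemma conv_prod_int (hb : Real.exp 2 ≤ b) :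
    Integrable (fun p : ℝ × ℝ => F b (p.1 - p.2) * F b p.2) (volume.prod volume) := by
  have h := (integrable_F hb).convolution_integrand (ContinuousLinearMap.mul ℝ ℝ)
    (integrable_F hb)
  simpa [ContinuousLinearMap.mul_apply', mul_comm] using h

lemma conv_prod_int_w (hb : Real.exp 2 ≤ b) {w : ℝ → ℝ} (hw : Measurable w) {C : ℝ}
    (hC : ∀ x ∈ Set.Ioo 2 (2 * b), |w x| ≤ C) :
    Integrable (fun p : ℝ × ℝ => F b (p.1 - p.2) * F b p.2 * w p.1) (volume.prod volume) := by
  refine Integrable.mono' ((conv_prod_int hb).norm.const_mul C) ?_ ?_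
  · exact (((measurable_F.comp (measurable_fst.sub measurable_snd)).mul
      (measurable_F.comp measurable_snd)).mul (hw.comp measurable_fst)).aestronglyMeasurable
  · refine Filter.Eventually.of_forall fun p => ?_
    by_cases hP : F b (p.1 - p.2) * F b p.2 = 0
    · simp [hP]
    · have h1 : F b (p.1 - p.2) ≠ 0 := fun h => hP (by rw [h, zero_mul])
      have h2 : F b p.2 ≠ 0 := fun h => hP (by rw [h, mul_zero])
      obtain ⟨ha1, ha2⟩ := F_supp h1
      obtain ⟨hb1', hb2'⟩ := F_supp h2
      have hmem : p.1 ∈ Set.Ioo 2 (2 * b) := ⟨by linarith, by linarith⟩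
      rw [norm_mul]
      calc ‖F b (p.1 - p.2) * F b p.2‖ * ‖w p.1‖
          ≤ ‖F b (p.1 - p.2) * F b p.2‖ * C := by
            apply mul_le_mul_of_nonneg_left ?_ (norm_nonneg _)
            simpa [Real.norm_eq_abs] using hC p.1 hmem
        _ = C * ‖F b (p.1 - p.2) * F b p.2‖ := mul_comm _ _

lemma inner_translate (y : ℝ) (w : ℝ → ℝ) :
    ∫ x, F b (x - y) * w x = ∫ u, F b u * w (u + y) := by
  have h := MeasureTheory.integral_sub_right_eq_self (μ := volume)
    (fun u => F b u * w (u + y)) y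
  simp only [sub_add_cancel] at h
  exact h

lemma inner_eq (y : ℝ) (w : ℝ → ℝ) :
    ∫ x, F b (x - y) * F b y * w x = F b y * ∫ u, F b u * w (u + y) := by
  have h2 : ∀ x, F b (x - y) * F b y * w x = F b y * (F b (x - y) * w x) := fun x => by ring
  simp only [h2]
  rw [integral_const_mul, inner_translate]

lemma fubini_full (hb : Real.exp 2 ≤ b) {w : ℝ → ℝ} (hw : Measurable w) {C : ℝ}
    (hC : ∀ x ∈ Set.Ioo 2 (2 * b), |w x| ≤ C) :
    ∫ x, (∫ y, F b (x - y) * F b y) * w x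
      = ∫ y, F b y * ∫ u, F b u * w (u + y) := by
  have h1 : ∀ x, (∫ y, F b (x - y) * F b y) * w x = ∫ y, F b (x - y) * F b y * w x := by
    intro x
    rw [← integral_mul_const]
  simp only [h1]
  rw [integral_integral_swap (conv_prod_int_w hb hw hC)]
  congr 1
  ext y
  exact inner_eq y w


lemma integral_conv (hb : Real.exp 2 ≤ b) : ∫ x, (∫ y, F b (x - y) * F b y) = 1 := by
  have h := fubini_full hb (w := fun _ => (1:ℝ)) measurable_const (C := 1) (fun x _ => by norm_num)
  simp only [mul_one] at h
  rw [h]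
  simp only [integral_F_eq_one hb, mul_one]

lemma integral_conv_log (hb : Real.exp 2 ≤ b) :
    2 / 3 * Real.log b ≤ ∫ x, (∫ y, F b (x - y) * F b y) * Real.log x := by
  have hL := hL2 hb
  have hbb := hb1 hb
  have hCw : ∀ x ∈ Set.Ioo 2 (2 * b), |Real.log x| ≤ Real.log (2 * b) := by
    intro x hx
    rw [abs_of_nonneg (Real.log_nonneg (by linarith [hx.1]))]
    exact Real.log_le_log (by linarith [hx.1]) hx.2.le
  rw [fubini_full hb Real.measurable_log hCw]
  have intB : Integrable (fun y => F b y * ∫ u, F b u * Real.log (u + y)) := by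
    have h := (conv_prod_int_w hb Real.measurable_log hCw).integral_prod_right
    refine h.congr (Filter.Eventually.of_forall fun y => ?_)
    exact inner_eq y Real.log
  have measA : AEStronglyMeasurable
      (fun y => F b y * (Real.log b / 2 + (Real.log y) ^ 2 / (2 * Real.log b))) volume := by
    apply Measurable.aestronglyMeasurable
    exact measurable_F.mul (measurable_const.add ((Real.measurable_log.pow_const 2).div_const _))
  have intA : Integrable
      (fun y => F b y * (Real.log b / 2 + (Real.log y) ^ 2 / (2 * Real.log b))) := by
    refine integrable_bdd_supp measA 1 b (Real.log b) ?_ ?_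
    · intro y hy
      unfold F
      rw [if_neg (by simpa [Set.mem_Ioo] using hy), zero_mul]
    · intro y
      by_cases hFy : F b y = 0
      · rw [hFy, zero_mul, abs_zero]; linarith
      · obtain ⟨hy1, hy2⟩ := F_supp hFy
        have hly0 : 0 ≤ Real.log y := Real.log_nonneg hy1.le
        have hlyL : Real.log y ≤ Real.log b := Real.log_le_log (by linarith) hy2.le
        rw [abs_mul]
        calc |F b y| * |Real.log b / 2 + (Real.log y) ^ 2 / (2 * Real.log b)|
            ≤ 1 * Real.log b := by
              apply mul_le_mul (F_le_one hb y) ?_ (abs_nonneg _) one_pos.le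
              rw [abs_of_nonneg (by positivity)]
              rw [div_add_div _ _ (by norm_num) (by positivity), div_le_iff₀ (by positivity)]
              nlinarith
          _ = Real.log b := one_mul _
  have key : ∀ y, F b y * (Real.log b / 2 + (Real.log y) ^ 2 / (2 * Real.log b))
      ≤ F b y * ∫ u, F b u * Real.log (u + y) := by
    intro y
    by_cases hFy : F b y = 0
    · rw [hFy, zero_mul, zero_mul]
    · obtain ⟨hy1, hy2⟩ := F_supp hFy
      have hy0 : (0:ℝ) < y := lt_trans one_pos hy1
      apply mul_le_mul_of_nonneg_left ?_ (F_nonneg hb y)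
      rw [← A_eq hb ⟨hy1, hy2⟩]
      have int1 : Integrable (fun u => F b u * (if y ≤ u then Real.log u else Real.log y)) := by
        refine integrable_bdd_supp ?_ 1 b (Real.log b) ?_ ?_
        · exact (measurable_F.mul (Measurable.ite measurableSet_Ici Real.measurable_log
            measurable_const)).aestronglyMeasurable
        · intro u hu
          unfold F
          rw [if_neg (by simpa [Set.mem_Ioo] using hu), zero_mul]
        · intro u
          by_cases hFu : F b u = 0
          · rw [hFu, zero_mul, abs_zero]; linarith
          · obtain ⟨hu1, hu2⟩ := F_supp hFu
            rw [abs_mul]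
            calc |F b u| * |if y ≤ u then Real.log u else Real.log y|
                ≤ 1 * Real.log b := by
                  apply mul_le_mul (F_le_one hb u) ?_ (abs_nonneg _) one_pos.le
                  split
                  · rw [abs_of_nonneg (Real.log_nonneg hu1.le)]
                    exact Real.log_le_log (by linarith) hu2.le
                  · rw [abs_of_nonneg (Real.log_nonneg hy1.le)]
                    exact Real.log_le_log hy0 hy2.le
              _ = Real.log b := one_mul _
      have int2 : Integrable (fun u => F b u * Real.log (u + y)) := by
        refine integrable_bdd_supp ?_ 1 b (Real.log (2 * b)) ?_ ?_
        · exact (measurable_F.mul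
            (Real.measurable_log.comp (measurable_id.add_const y))).aestronglyMeasurable
        · intro u hu
          unfold F
          rw [if_neg (by simpa [Set.mem_Ioo] using hu), zero_mul]
        · intro u
          by_cases hFu : F b u = 0
          · rw [hFu, zero_mul, abs_zero]
            apply Real.log_nonneg
            linarith
          · obtain ⟨hu1, hu2⟩ := F_supp hFu
            rw [abs_mul]
            calc |F b u| * |Real.log (u + y)|
                ≤ 1 * Real.log (2 * b) := by
                  apply mul_le_mul (F_le_one hb u) ?_ (abs_nonneg _) one_pos.le
                  rw [abs_of_nonneg (Real.log_nonneg (by linarith))]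
                  exact Real.log_le_log (by linarith) (by linarith)
              _ = Real.log (2 * b) := one_mul _
      apply integral_mono int1 int2
      intro u
      by_cases hFu : F b u = 0
      · simp only [hFu, zero_mul, le_refl]
      · obtain ⟨hu1, hu2⟩ := F_supp hFu
        have hu0 : (0:ℝ) < u := lt_trans one_pos hu1
        apply mul_le_mul_of_nonneg_left ?_ (F_nonneg hb u)
        split
        · exact Real.log_le_log hu0 (by linarith)
        · exact Real.log_le_log hy0 (by linarith)
  calc 2 / 3 * Real.log b
      = ∫ y, F b y * (Real.log b / 2 + (Real.log y) ^ 2 / (2 * Real.log b)) :=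
        (outer_eq hb).symm
    _ ≤ ∫ y, F b y * ∫ u, F b u * Real.log (u + y) := integral_mono intA intB key


lemma main (hb : Real.exp 2 ≤ b) :
    -∫ x, (∫ y, F b (x - y) * F b y) * Real.log (∫ y, F b (x - y) * F b y)
      > 2 / 3 * Real.log b - Real.log 2 := by
  have hL := hL2 hb
  have hbb := hb1 hb
  have hGmeas : Measurable fun x => ∫ y, F b (x - y) * F b y := conv_meas
  have intG : Integrable (fun x => ∫ y, F b (x - y) * F b y) :=
    (conv_prod_int hb).integral_prod_left
  have hlog2b : (0:ℝ) ≤ Real.log (2 * b) := Real.log_nonneg (by linarith)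
  have intGlogG : Integrable
      (fun x => (∫ y, F b (x - y) * F b y) * Real.log (∫ y, F b (x - y) * F b y)) := by
    refine integrable_bdd_supp ?_ 2 (2 * b) 1 ?_ ?_
    · exact (hGmeas.mul (Real.measurable_log.comp hGmeas)).aestronglyMeasurable
    · intro x hx
      rw [conv_zero hb hx, zero_mul]
    · intro x
      set t := ∫ y, F b (x - y) * F b y with ht
      have ht0 : 0 ≤ t := conv_nonneg hb x
      have ht12 : t ≤ 1 / 2 := conv_le_half hb x
      by_cases hteq : t = 0
      · rw [hteq, zero_mul, abs_zero]; norm_num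
      · have htpos : 0 < t := ht0.lt_of_ne (Ne.symm hteq)
        have hlt : Real.log t ≤ 0 := Real.log_nonpos ht0 (by linarith)
        have hinv := Real.log_le_sub_one_of_pos (inv_pos.2 htpos)
        rw [Real.log_inv] at hinv
        rw [abs_of_nonpos (mul_nonpos_of_nonneg_of_nonpos ht0 hlt)]
        have h1 : -(t * Real.log t) = t * (-Real.log t) := by ring
        rw [h1]
        have h2 : t * (-Real.log t) ≤ t * (t⁻¹ - 1) :=
          mul_le_mul_of_nonneg_left hinv ht0
        have h3 : t * (t⁻¹ - 1) = 1 - t := by field_simp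
        nlinarith
  have intGlogx : Integrable (fun x => (∫ y, F b (x - y) * F b y) * Real.log x) := by
    refine integrable_bdd_supp ?_ 2 (2 * b) (Real.log (2 * b)) ?_ ?_
    · exact (hGmeas.mul Real.measurable_log).aestronglyMeasurable
    · intro x hx
      rw [conv_zero hb hx, zero_mul]
    · intro x
      by_cases hx : x ∈ Set.Ioo 2 (2 * b)
      · rw [abs_mul]
        calc |∫ y, F b (x - y) * F b y| * |Real.log x| ≤ 1 * Real.log (2 * b) := by
              apply mul_le_mul ?_ ?_ (abs_nonneg _) one_pos.le
              · rw [abs_of_nonneg (conv_nonneg hb x)]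
                linarith [conv_le_half hb x]
              · rw [abs_of_nonneg (Real.log_nonneg (by linarith [hx.1]))]
                exact Real.log_le_log (by linarith [hx.1]) hx.2.le
          _ = Real.log (2 * b) := one_mul _
      · rw [conv_zero hb hx, zero_mul, abs_zero]
        exact hlog2b
  have hpt : ∀ x, (∫ y, F b (x - y) * F b y)
        * (Real.log x + (Real.log (Real.log b) - Real.log 2))
      ≤ -((∫ y, F b (x - y) * F b y) * Real.log (∫ y, F b (x - y) * F b y)) := by
    intro x
    by_cases hx : (∫ y, F b (x - y) * F b y) = 0
    · rw [hx, zero_mul, zero_mul, neg_zero]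
    · have hpos : 0 < ∫ y, F b (x - y) * F b y := (conv_nonneg hb x).lt_of_ne (Ne.symm hx)
      have hx2 : 2 < x := by
        by_contra h
        exact hx (conv_zero hb fun hm => h hm.1)
      have hx0 : (0:ℝ) < x := by linarith
      have hlog : Real.log (∫ y, F b (x - y) * F b y)
          ≤ Real.log 2 - (Real.log x + Real.log (Real.log b)) := by
        calc Real.log (∫ y, F b (x - y) * F b y) ≤ Real.log (2 / (x * Real.log b)) :=
              Real.log_le_log hpos (conv_le hb hx2)
          _ = Real.log 2 - (Real.log x + Real.log (Real.log b)) := by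
              rw [Real.log_div (by norm_num) (by positivity),
                Real.log_mul (by positivity) (by positivity)]
      have h2 := mul_le_mul_of_nonneg_left hlog (conv_nonneg hb x)
      nlinarith
  have intGW : Integrable (fun x => (∫ y, F b (x - y) * F b y)
      * (Real.log x + (Real.log (Real.log b) - Real.log 2))) := by
    have heq : (fun x => (∫ y, F b (x - y) * F b y)
          * (Real.log x + (Real.log (Real.log b) - Real.log 2)))
        = fun x => (∫ y, F b (x - y) * F b y) * Real.log x
          + (∫ y, F b (x - y) * F b y) * (Real.log (Real.log b) - Real.log 2) :=
      funext fun x => by ring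
    rw [heq]
    exact intGlogx.add (intG.mul_const _)
  have hmono := integral_mono intGW intGlogG.neg hpt
  simp only [Pi.neg_apply] at hmono
  rw [integral_neg] at hmono
  have hsplit : ∫ x, (∫ y, F b (x - y) * F b y)
      * (Real.log x + (Real.log (Real.log b) - Real.log 2))
      = (∫ x, (∫ y, F b (x - y) * F b y) * Real.log x)
        + (Real.log (Real.log b) - Real.log 2) := by
    have heq : (fun x => (∫ y, F b (x - y) * F b y)
          * (Real.log x + (Real.log (Real.log b) - Real.log 2)))
        = fun x => (∫ y, F b (x - y) * F b y) * Real.log x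
          + (∫ y, F b (x - y) * F b y) * (Real.log (Real.log b) - Real.log 2) :=
      funext fun x => by ring
    rw [heq, integral_add intGlogx (intG.mul_const _), integral_mul_const,
      integral_conv hb, one_mul]
  have hbig := integral_conv_log hb
  have hlogL : 0 < Real.log (Real.log b) := Real.log_pos (by linarith)
  linarith [hmono, hsplit, hbig]

end Stmt5

/-- For `b ≥ e²`, the differential entropy of the sum of two independent copies of
a truncated Pareto random variable (whose density is the self-convolution `g = f*f`)
exceeds `(2/3) log b − log 2`. -/
theorem stmt_5 (b : ℝ) (hb : Real.exp 2 ≤ b)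
    (f : ℝ → ℝ)
    (hf : f = fun x => if 1 < x ∧ x < b then 1 / (x * Real.log b) else 0)
    (g : ℝ → ℝ) (hg : g = fun x => ∫ y, f (x - y) * f y) :
    -∫ x, g x * Real.log (g x) > (2 / 3) * Real.log b - Real.log 2 := by
  subst hf
  subst hg
  exact Stmt5.main hb
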